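/- Let y(x) be the formal power series solution of y(1-y)^\tau = x with y(0)=0. Then the formal power series 1 + ((1+\tau)/\tau) \sum_{k ≥ 1} (\prod_{a=0}^{k-1}(k\tau+a)/k!) x^k equals 1/(1 - (\tau+1) y(x)). -/

import Mathlib

open PowerSeries

/-- `(1+u)^τ := ∑_n binom(τ,n) u^n`, the formal binomial power. -/
noncomputable def binomPow {K : Type*} [Field K] (τ : K) (u : PowerSeries K) :
    PowerSeries K :=
  PowerSeries.mk fun m => ∑ n ∈ Finset.range (m + 1),
    ((∏ a ∈ Finset.range n, (τ - (a : K))) / (Nat.factorial n : K)) *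
      PowerSeries.coeff (R := K) m (u ^ n)

open Finset

section BC

variable {K : Type*} [Field K] [CharZero K]

/-- generalized binomial coefficient -/
noncomputable def tbc (r : K) (n : ℕ) : K :=
  (∏ i ∈ Finset.range n, (r - (i : K))) / (Nat.factorial n : K)

omit [CharZero K] in
lemma tbc_zero (r : K) : tbc r 0 = 1 := by simp [tbc]

lemma tfact_ne (n : ℕ) : ((Nat.factorial n : ℕ) : K) ≠ 0 :=
  Nat.cast_ne_zero.mpr (Nat.factorial_ne_zero n)

lemma tbc_succ (r : K) (n : ℕ) : tbc r (n + 1) = tbc r n * (r - n) / (n + 1) := by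
  have h1 : ((n : K) + 1) ≠ 0 := Nat.cast_add_one_ne_zero n
  have h2 : ((Nat.factorial n : ℕ) : K) ≠ 0 := tfact_ne n
  rw [tbc, tbc, prod_range_succ, Nat.factorial_succ]
  push_cast
  rw [div_mul_eq_mul_div, div_div, mul_comm ((n : K) + 1) _]

lemma tbc_absorb (r : K) (n : ℕ) : ((n : K) + 1) * tbc r (n + 1) = r * tbc (r - 1) n := by
  have h1 : ((n : K) + 1) ≠ 0 := Nat.cast_add_one_ne_zero n
  have h2 : ((Nat.factorial n : ℕ) : K) ≠ 0 := tfact_ne n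
  have hc : ∀ i ∈ range n, r - (↑(i + 1) : K) = (r - 1) - i := by intro i _; push_cast; ring
  rw [tbc, tbc, prod_range_succ', prod_congr rfl hc, Nat.factorial_succ]
  push_cast
  field_simp
  ring

omit [CharZero K] in
lemma tbc_reflect (r : K) (n : ℕ) : tbc r n * (-1) ^ n = tbc ((n : K) - r - 1) n := by
  rw [tbc, tbc]
  have k1 : ∏ i ∈ range n, (((n : K) - r - 1) - i) = ∏ i ∈ range n, ((i : K) - r) := by
    rw [← prod_range_reflect (fun j => (j : K) - r) n]
    refine prod_congr rfl fun j hj => ?_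
    have hj' : j + 1 ≤ n := mem_range.mp hj
    have hs : n - 1 - j = n - (j + 1) := by omega
    have : ((n - 1 - j : ℕ) : K) = (n : K) - (j + 1) := by
      rw [hs, Nat.cast_sub hj']; push_cast; ring
    simp only [this]; ring
  have k2 : ∏ i ∈ range n, ((i : K) - r) = (-1) ^ n * ∏ i ∈ range n, (r - i) := by
    simp_rw [show ∀ i : ℕ, ((i : K) - r) = (-1) * (r - i) by intro i; ring]
    rw [prod_mul_distrib, prod_const, card_range]
  rw [div_mul_eq_mul_div, k1, k2, mul_comm]

omit [CharZero K] in
lemma tdescPochhammer_smeval_eq_prod (r : K) (n : ℕ) :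
    (descPochhammer ℤ n).smeval r = ∏ i ∈ range n, (r - (i : K)) := by
  induction n with
  | zero => simp [descPochhammer_zero, Polynomial.smeval_one]
  | succ n ih =>
      rw [descPochhammer_succ_right, Polynomial.smeval_mul, ih, Polynomial.smeval_sub,
        Polynomial.smeval_X, Polynomial.smeval_natCast, prod_range_succ]
      simp

lemma tbc_eq_choose (r : K) (n : ℕ) : tbc r n = Ring.choose r n := by
  have h := Ring.descPochhammer_eq_factorial_smul_choose r n
  rw [tdescPochhammer_smeval_eq_prod, nsmul_eq_mul] at h
  rw [tbc, h, mul_comm, mul_div_assoc, div_self (tfact_ne n), mul_one]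

lemma tbc_vandermonde (a b : K) (n : ℕ) :
    ∑ i ∈ range (n + 1), tbc a i * tbc b (n - i) = tbc (a + b) n := by
  simp_rw [tbc_eq_choose]
  rw [show (n + 1) = n.succ from rfl,
    ← Finset.Nat.sum_antidiagonal_eq_sum_range_succ_mk
      (fun ij => Ring.choose a ij.1 * Ring.choose b ij.2)]
  exact (Ring.add_choose_eq n (Commute.all a b)).symm

omit [CharZero K] in
lemma tneg_one_sq_pow (M : ℕ) : ((-1 : K) ^ M) * ((-1 : K) ^ M) = 1 := by
  rw [← pow_add, ← two_mul, pow_mul]; norm_num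

lemma tbc_diamond (a b : K) (M : ℕ) :
    ∑ l ∈ range (M + 1), tbc (a + l) l * tbc (b - l) (M - l) = tbc (a + b + 1) M := by
  have step : ∀ l ∈ range (M + 1), tbc (a + l) l * tbc (b - l) (M - l)
      = (-1 : K) ^ M * (tbc (-a - 1) l * tbc ((M : K) - b - 1) (M - l)) := by
    intro l hl
    have hlM : l ≤ M := Nat.lt_succ_iff.mp (mem_range.mp hl)
    have e1 : tbc (a + (l : K)) l = tbc (-a - 1) l * (-1 : K) ^ l := by
      rw [tbc_reflect]; congr 1; ring
    have e2 : tbc (b - l) (M - l) = tbc ((M : K) - b - 1) (M - l) * (-1 : K) ^ (M - l) := by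
      rw [tbc_reflect, Nat.cast_sub hlM]; congr 1; ring
    rw [e1, e2]
    have e3 : (-1 : K) ^ l * (-1 : K) ^ (M - l) = (-1 : K) ^ M := by
      rw [← pow_add]; congr 1; omega
    calc tbc (-a - 1) l * (-1 : K) ^ l * (tbc ((M : K) - b - 1) (M - l) * (-1 : K) ^ (M - l))
        = ((-1 : K) ^ l * (-1 : K) ^ (M - l)) * (tbc (-a - 1) l * tbc ((M : K) - b - 1) (M - l)) :=
          by ring
      _ = _ := by rw [e3]
  rw [sum_congr rfl step, ← mul_sum, tbc_vandermonde]
  have : (-a - 1) + ((M : K) - b - 1) = (M : K) - (a + b + 1) - 1 := by ring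
  rw [this, ← tbc_reflect]
  calc (-1 : K) ^ M * (tbc (a + b + 1) M * (-1 : K) ^ M)
      = tbc (a + b + 1) M * ((-1 : K) ^ M * (-1 : K) ^ M) := by ring
    _ = tbc (a + b + 1) M := by rw [tneg_one_sq_pow, mul_one]

end BC

section PS

variable {K : Type*} [Field K] [CharZero K] {u : PowerSeries K}

omit [CharZero K] in
lemma tcoeff_binomPow (s : K) (u : PowerSeries K) (m : ℕ) :
    coeff (R := K) m (binomPow s u) = ∑ n ∈ range (m + 1), tbc s n * coeff (R := K) m (u ^ n) := by
  rw [binomPow, coeff_mk]; rfl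

omit [CharZero K] in
lemma tcoeff_pow_of_lt (hu : constantCoeff (R := K) u = 0) {m n : ℕ} (h : m < n) :
    coeff (R := K) m (u ^ n) = 0 :=
  PowerSeries.X_pow_dvd_iff.mp (pow_dvd_pow_of_dvd (PowerSeries.X_dvd_iff.mpr hu) n) m h

omit [CharZero K] in
lemma tcoeff_binomPow_ext (hu : constantCoeff (R := K) u = 0) (s : K) (m N : ℕ) (hN : m + 1 ≤ N) :
    coeff (R := K) m (binomPow s u) = ∑ n ∈ range N, tbc s n * coeff (R := K) m (u ^ n) := by
  rw [tcoeff_binomPow]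
  refine Finset.sum_subset (range_subset_range.mpr hN) fun x _ hx => ?_
  rw [tcoeff_pow_of_lt hu
    (by simpa using Nat.lt_of_succ_le (not_lt.mp (by simpa using hx))), mul_zero]

lemma tbinomPow_mul (hu : constantCoeff (R := K) u = 0) (a b : K) :
    binomPow a u * binomPow b u = binomPow (a + b) u := by
  ext m
  rw [PowerSeries.coeff_mul]
  set F : ℕ × ℕ → K := fun p => tbc a p.1 * tbc b p.2 * coeff (R := K) m (u ^ (p.1 + p.2)) with hF
  have hL : ∑ p ∈ antidiagonal m, coeff (R := K) p.1 (binomPow a u) * coeff (R := K) p.2 (binomPow b u)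
      = ∑ p ∈ range (m + 1) ×ˢ range (m + 1), F p := by
    have h1 : ∀ p ∈ antidiagonal m,
        coeff (R := K) p.1 (binomPow a u) * coeff (R := K) p.2 (binomPow b u)
        = ∑ q ∈ range (m + 1) ×ˢ range (m + 1),
            tbc a q.1 * tbc b q.2 * (coeff (R := K) p.1 (u ^ q.1) * coeff (R := K) p.2 (u ^ q.2)) := by
      intro p hp
      have hp1 : p.1 + 1 ≤ m + 1 := by
        have := Finset.HasAntidiagonal.mem_antidiagonal.mp hp; omega
      have hp2 : p.2 + 1 ≤ m + 1 := by
        have := Finset.HasAntidiagonal.mem_antidiagonal.mp hp; omega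
      rw [tcoeff_binomPow_ext hu a p.1 (m + 1) hp1, tcoeff_binomPow_ext hu b p.2 (m + 1) hp2,
        Finset.sum_mul_sum, Finset.sum_product]
      exact Finset.sum_congr rfl fun x _ => Finset.sum_congr rfl fun y _ => by ring
    rw [Finset.sum_congr rfl h1, Finset.sum_comm]
    refine Finset.sum_congr rfl fun q _ => ?_
    rw [← mul_sum, ← PowerSeries.coeff_mul, ← pow_add]
  rw [hL, tcoeff_binomPow_ext hu (a + b) m (m + 1) le_rfl]
  have hRHS : ∑ n ∈ range (m + 1), tbc (a + b) n * coeff (R := K) m (u ^ n)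
      = ∑ t ∈ range (m + 1), ∑ p ∈ antidiagonal t, F p := by
    refine Finset.sum_congr rfl fun t _ => ?_
    rw [← tbc_vandermonde a b t, Finset.sum_mul,
      ← Finset.Nat.sum_antidiagonal_eq_sum_range_succ_mk
        (fun p => tbc a p.1 * tbc b p.2 * coeff (R := K) m (u ^ t))]
    refine Finset.sum_congr rfl fun p hp => ?_
    have := Finset.HasAntidiagonal.mem_antidiagonal.mp hp
    simp only [hF, this]
  rw [hRHS]
  have hdisj : Set.PairwiseDisjoint ↑(range (m + 1)) (fun t : ℕ => antidiagonal t) := by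
    intro t1 _ t2 _ hne
    refine Finset.disjoint_left.mpr fun p hp1 hp2 => hne ?_
    rw [← Finset.HasAntidiagonal.mem_antidiagonal.mp hp1, ← Finset.HasAntidiagonal.mem_antidiagonal.mp hp2]
  rw [← Finset.sum_biUnion hdisj]
  refine (Finset.sum_subset ?_ ?_).symm
  · intro p hp
    rw [Finset.mem_biUnion] at hp
    obtain ⟨t, ht, hpt⟩ := hp
    have h1 := Finset.HasAntidiagonal.mem_antidiagonal.mp hpt
    rw [Finset.mem_range] at ht
    rw [Finset.mem_product, Finset.mem_range, Finset.mem_range]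
    omega
  · intro p _ hp
    have hgt : m < p.1 + p.2 := by
      by_contra h
      exact hp (Finset.mem_biUnion.mpr ⟨p.1 + p.2, Finset.mem_range.mpr (by omega),
        Finset.HasAntidiagonal.mem_antidiagonal.mpr rfl⟩)
    simp only [hF, tcoeff_pow_of_lt hu hgt, mul_zero]

omit [CharZero K] in
lemma tbinomPow_zero (u : PowerSeries K) : binomPow (0 : K) u = 1 := by
  ext m
  rw [tcoeff_binomPow]
  have : ∀ n ∈ range (m + 1), tbc (0 : K) n * coeff (R := K) m (u ^ n)
      = (if n = 0 then coeff (R := K) m (1 : PowerSeries K) else 0) := by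
    intro n _
    cases n with
    | zero => simp [tbc_zero]
    | succ k =>
        have : tbc (0 : K) (k + 1) = 0 := by
          rw [tbc]
          rw [Finset.prod_eq_zero (Finset.mem_range.mpr (Nat.succ_pos k)) (by simp)]
          simp
        simp [this]
  rw [Finset.sum_congr rfl this, Finset.sum_ite_eq' (range (m + 1)) 0]
  simp

omit [CharZero K] in
lemma tconstantCoeff_binomPow (hu : constantCoeff (R := K) u = 0) (s : K) :
    constantCoeff (R := K) (binomPow s u) = 1 := by
  rw [← PowerSeries.coeff_zero_eq_constantCoeff_apply, tcoeff_binomPow]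
  simp [tbc_zero]

end PS
section Y

variable {K : Type*} [Field K] [CharZero K] {τ : K} {y : PowerSeries K}

omit [CharZero K] in
lemma thny (h0 : constantCoeff (R := K) y = 0) : constantCoeff (R := K) (-y) = 0 := by
  rw [map_neg, h0, neg_zero]

omit [CharZero K] in
lemma tBne (h0 : constantCoeff (R := K) y = 0) : binomPow τ (-y) ≠ 0 := by
  intro h
  have := tconstantCoeff_binomPow (thny h0) τ
  rw [h, map_zero] at this
  exact zero_ne_one this

lemma tPB (h0 : constantCoeff (R := K) y = 0) :
    ∀ i : ℕ, binomPow (-(i : K) * τ) (-y) * (binomPow τ (-y)) ^ i = 1 := by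
  intro i
  induction i with
  | zero => simp [tbinomPow_zero]
  | succ i ih =>
      have h1 : binomPow (-((i : K) + 1) * τ) (-y) * binomPow τ (-y)
          = binomPow (-(i : K) * τ) (-y) := by
        rw [tbinomPow_mul (thny h0)]
        congr 1
        ring
      calc binomPow (-(↑(i + 1) : K) * τ) (-y) * binomPow τ (-y) ^ (i + 1)
          = (binomPow (-((i : K) + 1) * τ) (-y) * binomPow τ (-y)) * binomPow τ (-y) ^ i := by
            push_cast; ring
        _ = binomPow (-(i : K) * τ) (-y) * binomPow τ (-y) ^ i := by rw [h1]
        _ = 1 := ih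

lemma typow (h0 : constantCoeff (R := K) y = 0) (heq : y * binomPow τ (-y) = PowerSeries.X)
    (j : ℕ) : y ^ j = PowerSeries.X ^ j * binomPow (-(j : K) * τ) (-y) := by
  have h1 : y ^ j * (binomPow τ (-y)) ^ j = PowerSeries.X ^ j := by
    rw [← mul_pow, heq]
  calc y ^ j = y ^ j * (binomPow (-(j : K) * τ) (-y) * (binomPow τ (-y)) ^ j) := by
        rw [tPB h0 j, mul_one]
    _ = (y ^ j * (binomPow τ (-y)) ^ j) * binomPow (-(j : K) * τ) (-y) := by ring
    _ = PowerSeries.X ^ j * binomPow (-(j : K) * τ) (-y) := by rw [h1]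

lemma tcoeff_ypow (h0 : constantCoeff (R := K) y = 0) (heq : y * binomPow τ (-y) = PowerSeries.X)
    {m j : ℕ} (hj : j ≤ m) :
    coeff (R := K) m (y ^ j) = coeff (R := K) (m - j) (binomPow (-(j : K) * τ) (-y)) := by
  rw [typow h0 heq j]
  rw [PowerSeries.coeff_X_pow_mul', if_pos hj]

omit [CharZero K] in
lemma tcoeff_neg_pow (φ : PowerSeries K) (n m : ℕ) :
    coeff (R := K) m ((-φ) ^ n) = (-1) ^ n * coeff (R := K) m (φ ^ n) := by
  have : (-φ) ^ n = PowerSeries.C (R := K) ((-1) ^ n) * φ ^ n := by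
    rw [neg_pow]
    congr 1
    rw [map_pow, map_neg, map_one]
  rw [this, PowerSeries.coeff_C_mul]

/-- key per-term algebraic step -/
lemma tstep1 (s : K) (l : ℕ) :
    tbc s (l + 1) * (-1 : K) ^ (l + 1) * ((l : K) + 1) = -s * tbc (-s + l) l := by
  have habs := tbc_absorb s l
  have hrefl := tbc_reflect (s - 1) l
  have harg : ((l : K)) - (s - 1) - 1 = -s + l := by ring
  rw [harg] at hrefl
  rw [pow_succ, ← hrefl]
  calc tbc s (l + 1) * ((-1 : K) ^ l * -1) * ((l : K) + 1)
      = -(((l : K) + 1) * tbc s (l + 1)) * (-1 : K) ^ l := by ring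
    _ = -(s * tbc (s - 1) l) * (-1 : K) ^ l := by rw [habs]
    _ = -s * (tbc (s - 1) l * (-1 : K) ^ l) := by ring

/-- Lemma N : the coefficients of `(1-y)^s`. -/
lemma tcoeffN (h0 : constantCoeff (R := K) y = 0) (heq : y * binomPow τ (-y) = PowerSeries.X) :
    ∀ M : ℕ, ∀ s : K, coeff (R := K) (M + 1) (binomPow s (-y))
      = -(s / ((M : K) + 1)) * tbc (((M : K) + 1) * τ + ((M : K) + 1) - 1 - s) M := by
  intro M
  induction M using Nat.strong_induction_on with
  | _ M IH =>
  intro s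
  rw [tcoeff_binomPow_ext (thny h0) s (M + 1) (M + 2) (by omega), Finset.sum_range_succ']
  have hlast : tbc s 0 * coeff (R := K) (M + 1) ((-y) ^ 0) = 0 := by
    simp [PowerSeries.coeff_one]
  rw [hlast, add_zero]
  have key : ∀ l ∈ range (M + 1), tbc s (l + 1) * coeff (R := K) (M + 1) ((-y) ^ (l + 1))
      = -(s / ((M : K) + 1)) *
        (tbc (-s + l) l * tbc ((((M : K) + 1) * τ + ((M : K) + 1) - 2) - l) (M - l)) := by
    intro l hl
    have hlM : l ≤ M := Nat.lt_succ_iff.mp (mem_range.mp hl)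
    have hMne : ((M : K) + 1) ≠ 0 := Nat.cast_add_one_ne_zero M
    have hLne : ((l : K) + 1) ≠ 0 := Nat.cast_add_one_ne_zero l
    rw [tcoeff_neg_pow, tcoeff_ypow h0 heq (by omega : l + 1 ≤ M + 1),
      show M + 1 - (l + 1) = M - l from by omega]
    rcases eq_or_lt_of_le hlM with hEq | hLt
    · subst hEq
      rw [Nat.sub_self]
      rw [PowerSeries.coeff_zero_eq_constantCoeff_apply, tconstantCoeff_binomPow (thny h0)]
      have h1 := tstep1 s l
      rw [tbc_zero]
      field_simp
      linear_combination h1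
    · -- l < M
      set c := M - l - 1 with hc
      have hMl : M - l = c + 1 := by omega
      have hCast : (c : K) + (l : K) + 1 = (M : K) := by
        have : c + l + 1 = M := by omega
        exact_mod_cast congrArg (Nat.cast : ℕ → K) this
      have hCne : ((c : K) + 1) ≠ 0 := Nat.cast_add_one_ne_zero c
      rw [hMl, IH c (by omega) (-(↑(l + 1) : K) * τ)]
      have h1 := tstep1 s l
      set A : K := ((M : K) + 1) * τ + ((M : K) + 1) - 2 - l with hA
      have harg1 : ((c : K) + 1) * τ + ((c : K) + 1) - 1 - -(↑(l + 1) : K) * τ = A := by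
        rw [hA]; push_cast; linear_combination (1 + τ) * hCast
      rw [harg1, tbc_succ A c]
      have harg2 : A - (c : K) = ((M : K) + 1) * τ := by
        rw [hA]; linear_combination -hCast
      rw [harg2]
      calc tbc s (l + 1) * ((-1 : K) ^ (l + 1) * (-(-(↑(l + 1) : K) * τ / ((c : K) + 1)) * tbc A c))
          = (tbc s (l + 1) * (-1 : K) ^ (l + 1) * ((l : K) + 1)) * (τ / ((c : K) + 1)) * tbc A c :=
            by push_cast; ring
        _ = (-s * tbc (-s + l) l) * (τ / ((c : K) + 1)) * tbc A c := by rw [h1]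
        _ = -(s / ((M : K) + 1)) * (tbc (-s + ↑l) l * (tbc A c * (((M : K) + 1) * τ) / ((c : K) + 1))) := by
            field_simp
  rw [sum_congr rfl key, ← mul_sum, tbc_diamond (-s) (((M : K) + 1) * τ + ((M : K) + 1) - 2) M]
  rw [show -s + (((M : K) + 1) * τ + ((M : K) + 1) - 2) + 1
      = ((M : K) + 1) * τ + ((M : K) + 1) - 1 - s from by ring]

end Y
section Final

variable {K : Type*} [Field K] [CharZero K] {τ : K} {y : PowerSeries K}

omit [CharZero K] in
lemma tden_const (h0 : constantCoeff (R := K) y = 0) :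
    constantCoeff (R := K) (1 - PowerSeries.C (R := K) (τ + 1) * y) = 1 := by
  simp [h0]

omit [CharZero K] in
lemma tden_ne (h0 : constantCoeff (R := K) y = 0) :
    constantCoeff (R := K) (1 - PowerSeries.C (R := K) (τ + 1) * y) ≠ 0 := by
  rw [tden_const h0]; exact one_ne_zero

omit [CharZero K] in
lemma tTrec (h0 : constantCoeff (R := K) y = 0) :
    (1 - PowerSeries.C (R := K) (τ + 1) * y)⁻¹
      = 1 + PowerSeries.C (R := K) (τ + 1) * (y * (1 - PowerSeries.C (R := K) (τ + 1) * y)⁻¹) := by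
  have h := PowerSeries.mul_inv_cancel _ (tden_ne (τ := τ) h0)
  linear_combination h

lemma tyP (h0 : constantCoeff (R := K) y = 0) (heq : y * binomPow τ (-y) = PowerSeries.X) (i : ℕ) :
    y * binomPow (-(i : K) * τ) (-y) = PowerSeries.X * binomPow (-(↑(i + 1) : K) * τ) (-y) := by
  have hBne : binomPow τ (-y) ≠ 0 := tBne h0
  apply mul_right_cancel₀ (pow_ne_zero (i + 1) hBne)
  calc y * binomPow (-(i : K) * τ) (-y) * binomPow τ (-y) ^ (i + 1)
      = (y * binomPow τ (-y)) * (binomPow (-(i : K) * τ) (-y) * binomPow τ (-y) ^ i) := by ring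
    _ = PowerSeries.X * 1 := by rw [heq, tPB h0 i]
    _ = PowerSeries.X * (binomPow (-(↑(i + 1) : K) * τ) (-y) * binomPow τ (-y) ^ (i + 1)) := by
        rw [tPB h0 (i + 1)]
    _ = PowerSeries.X * binomPow (-(↑(i + 1) : K) * τ) (-y) * binomPow τ (-y) ^ (i + 1) := by ring

lemma tcoeff_PT (h0 : constantCoeff (R := K) y = 0) (heq : y * binomPow τ (-y) = PowerSeries.X) :
    ∀ k i : ℕ, coeff (R := K) k (binomPow (-(i : K) * τ) (-y) * (1 - PowerSeries.C (R := K) (τ + 1) * y)⁻¹)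
      = tbc ((k : K) * τ + (k : K) + (i : K) * τ) k := by
  intro k
  induction k with
  | zero =>
      intro i
      rw [PowerSeries.coeff_zero_eq_constantCoeff_apply, map_mul,
        tconstantCoeff_binomPow (thny h0), PowerSeries.constantCoeff_inv, tden_const h0,
        one_mul, inv_one]
      simp [tbc_zero]
  | succ k IH =>
      intro i
      have hexp : binomPow (-(i : K) * τ) (-y) * (1 - PowerSeries.C (R := K) (τ + 1) * y)⁻¹
          = binomPow (-(i : K) * τ) (-y) + PowerSeries.C (R := K) (τ + 1) *
            (PowerSeries.X * (binomPow (-(↑(i + 1) : K) * τ) (-y)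
              * (1 - PowerSeries.C (R := K) (τ + 1) * y)⁻¹)) := by
        calc binomPow (-(i : K) * τ) (-y) * (1 - PowerSeries.C (R := K) (τ + 1) * y)⁻¹
            = binomPow (-(i : K) * τ) (-y) * (1 + PowerSeries.C (R := K) (τ + 1) *
                (y * (1 - PowerSeries.C (R := K) (τ + 1) * y)⁻¹)) := by rw [← tTrec h0]
          _ = binomPow (-(i : K) * τ) (-y) + PowerSeries.C (R := K) (τ + 1) *
                ((y * binomPow (-(i : K) * τ) (-y)) * (1 - PowerSeries.C (R := K) (τ + 1) * y)⁻¹) := by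
              ring
          _ = _ := by rw [tyP h0 heq i]; ring
      rw [hexp, map_add, tcoeffN h0 heq k (-(i : K) * τ), PowerSeries.coeff_C_mul,
        PowerSeries.coeff_succ_X_mul, IH (i + 1)]
      have hk : ((k : K) + 1) ≠ 0 := Nat.cast_add_one_ne_zero k
      have habs := tbc_absorb (((k : K) + 1) * τ + ((k : K) + 1) + (i : K) * τ) k
      rw [show ((k : K) + 1) * τ + ((k : K) + 1) + (i : K) * τ - 1
          = ((k : K) + 1) * τ + (k : K) + (i : K) * τ from by ring] at habs
      rw [show ((k : K) + 1) * τ + ((k : K) + 1) - 1 - -(i : K) * τ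
          = ((k : K) + 1) * τ + (k : K) + (i : K) * τ from by ring]
      rw [show ((↑(k + 1) : K)) * τ + (↑(k + 1) : K) + (i : K) * τ
          = ((k : K) + 1) * τ + ((k : K) + 1) + (i : K) * τ from by push_cast; ring]
      rw [show (k : K) * τ + (k : K) + (↑(i + 1) : K) * τ
          = ((k : K) + 1) * τ + (k : K) + (i : K) * τ from by push_cast; ring]
      apply mul_left_cancel₀ hk
      rw [habs]
      field_simp
      ring

theorem tmain (hτ : τ ≠ 0) (h0 : constantCoeff (R := K) y = 0)
    (heq : y * binomPow τ (-y) = PowerSeries.X) :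
    (PowerSeries.mk fun k =>
        if k = 0 then 1 else
          ((1 + τ) / τ) *
            ((∏ a ∈ Finset.range k, ((k : K) * τ + (a : K))) /
              (Nat.factorial k : K))) *
      (1 - PowerSeries.C (R := K) (τ + 1) * y) = 1 := by
  have hS : (PowerSeries.mk fun k =>
        if k = 0 then 1 else
          ((1 + τ) / τ) *
            ((∏ a ∈ Finset.range k, ((k : K) * τ + (a : K))) /
              (Nat.factorial k : K)))
      = (1 - PowerSeries.C (R := K) (τ + 1) * y)⁻¹ := by
    ext k
    rw [PowerSeries.coeff_mk]
    have hT := tcoeff_PT h0 heq k 0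
    simp only [Nat.cast_zero, neg_zero, zero_mul, tbinomPow_zero, one_mul, add_zero] at hT
    rw [hT]
    cases k with
    | zero => simp [tbc_zero]
    | succ k =>
        rw [if_neg (Nat.succ_ne_zero k)]
        set N : K := (↑(k + 1) : K) with hN
        have hNk : N = (k : K) + 1 := by rw [hN]; push_cast; ring
        have h1 : ∏ i ∈ range (k + 1), (N * τ + N - i)
            = ∏ a ∈ range (k + 1), (N * τ + (↑(a + 1) : K)) := by
          rw [← prod_range_reflect (fun a => N * τ + (↑(a + 1) : K)) (k + 1)]
          refine prod_congr rfl fun j hj => ?_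
          have hj' : j + 1 ≤ k + 1 := mem_range.mp hj
          have hss : k + 1 - 1 - j = k + 1 - (j + 1) := by omega
          have hcast : ((k + 1 - 1 - j : ℕ) : K) = N - (↑j + 1) := by
            rw [hss, Nat.cast_sub hj', hN]; push_cast; ring
          rw [show (↑(k + 1 - 1 - j + 1) : K) = ((k + 1 - 1 - j : ℕ) : K) + 1 from by push_cast; ring,
            hcast]
          ring
        have h2 : ∏ a ∈ range (k + 1), (N * τ + (a : K))
            = (∏ a ∈ range k, (N * τ + (↑(a + 1) : K))) * (N * τ) := by
          rw [prod_range_succ' (fun a => N * τ + (a : K)) k]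
          simp
        have h3 : ∏ a ∈ range (k + 1), (N * τ + (↑(a + 1) : K))
            = (∏ a ∈ range k, (N * τ + (↑(a + 1) : K))) * (N * τ + N) := by
          rw [prod_range_succ, ← hN]
        rw [tbc, h1, h3, h2]
        have hfact : ((Nat.factorial (k + 1) : ℕ) : K) ≠ 0 := tfact_ne (k + 1)
        field_simp
        ring
  rw [hS]
  exact PowerSeries.inv_mul_cancel _ (tden_ne h0)

end Final

instance : CharZero (RatFunc ℚ) :=
  charZero_of_injective_algebraMap (algebraMap ℚ (RatFunc ℚ)).injective

/-- If `y(x)` solves `y(1-y)^τ = x`, `y(0) = 0` (with `τ = RatFunc.X`),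
then `1 + ((1+τ)/τ) ∑_{k≥1} (∏_{a=0}^{k-1}(kτ+a)/k!) x^k = 1/(1-(τ+1)y(x))`,
i.e. the displayed series times `1 - (τ+1)y` equals `1`. -/
theorem t_series (y : PowerSeries (RatFunc ℚ))
    (h0 : PowerSeries.constantCoeff (R := RatFunc ℚ) y = 0)
    (heq : y * binomPow (RatFunc.X) (-y) = PowerSeries.X) :
    (PowerSeries.mk fun k =>
        if k = 0 then 1 else
          ((1 + RatFunc.X) / RatFunc.X) *
            ((∏ a ∈ Finset.range k, ((k : RatFunc ℚ) * RatFunc.X + (a : RatFunc ℚ))) /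
              (Nat.factorial k : RatFunc ℚ))) *
      (1 - PowerSeries.C (R := RatFunc ℚ) (RatFunc.X + 1) * y) = 1 :=
  tmain RatFunc.X_ne_zero h0 heq
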